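/- Let R be a commutative ring, M an R-module, and Λ(M) its exterior algebra. Let n ≥ 1, let e₁, …, eₙ, f₁, …, fₙ ∈ M, and let a = (a_{jk}) be an n × n matrix over R. Set ω = Σ_{j,k=1}^{n} a_{jk} · (e_j ∧ f_k) ∈ Λ²(M). Then for all indices 1 ≤ k, ℓ ≤ n: ω^(n−1) ∧ e_k ∧ f_ℓ = (n−1)! · adj(a)_{ℓk} · (e₁ ∧ f₁ ∧ e₂ ∧ f₂ ∧ ⋯ ∧ eₙ ∧ fₙ), where adj(a) is the adjugate matrix of a (so adj(a)_{ℓk} = (−1)^{k+ℓ} times the (k,ℓ) minor of a). In particular ω^n = n! · det(a) · (e₁ ∧ f₁ ∧ ⋯ ∧ eₙ ∧ fₙ). -/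

import Mathlib

open ExteriorAlgebra
set_option synthInstance.maxHeartbeats 1000000
set_option maxHeartbeats 1600000

theorem Equiv.Perm.apply_inv_self {α : Type*} (f : Equiv.Perm α) (x : α) : f (f⁻¹ x) = x := by simp
theorem Equiv.Perm.inv_apply_self {α : Type*} (f : Equiv.Perm α) (x : α) : f⁻¹ (f x) = x := by simp

namespace Stmt19Aux

variable {R : Type*} [CommRing R] {M : Type*} [AddCommGroup M] [Module R M]

lemma anticomm (x y : M) : ι R x * ι R y = -(ι R y * ι R x) :=
  eq_neg_of_add_eq_zero_left (ExteriorAlgebra.ι_add_mul_swap x y)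

lemma mm (x y : M) (z : ExteriorAlgebra R M) :
    ι R x * (ι R y * z) = -(ι R y * (ι R x * z)) := by
  rw [← mul_assoc, anticomm, neg_mul, mul_assoc]

lemma sq0 (x : M) (z : ExteriorAlgebra R M) : ι R x * (ι R x * z) = 0 := by
  rw [← mul_assoc, ι_sq_zero, zero_mul]

lemma zero_fst (w x z : M) :
    (ι R w * ι R x) * (ι R w * ι R z) = 0 := by
  simp only [mul_assoc]
  rw [mm x w, mul_neg, sq0, neg_zero]

lemma zero_snd (w x y : M) :
    (ι R w * ι R x) * (ι R y * ι R x) = 0 := by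
  simp only [mul_assoc]
  rw [mm x y, ι_sq_zero, mul_zero, neg_zero, mul_zero]

lemma four_swap (w x y z : M) :
    (ι R w * ι R x) * (ι R y * ι R z) = -((ι R w * ι R z) * (ι R y * ι R x)) := by
  simp only [mul_assoc]
  rw [mm x y]; simp only [mul_neg, neg_neg]
  rw [anticomm x z]; simp only [mul_neg, neg_neg]
  rw [mm y z]; simp only [mul_neg, neg_neg]

lemma pair_comm (w x y z : M) :
    (ι R w * ι R x) * (ι R y * ι R z) = (ι R y * ι R z) * (ι R w * ι R x) := by
  simp only [mul_assoc]
  rw [mm x y]; simp only [mul_neg, neg_neg]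
  rw [mm w y]; simp only [mul_neg, neg_neg]
  rw [anticomm x z]; simp only [mul_neg, neg_neg]
  rw [mm w z]; simp only [mul_neg, neg_neg]

variable (R) in
/-- The set of generators `ι(e_j) * ι(f_k)`. -/
def cs {n : ℕ} (e f : Fin n → M) : Set (ExteriorAlgebra R M) :=
  Set.range fun p : Fin n × Fin n => ι R (e p.1) * ι R (f p.2)

lemma cs_comm {n : ℕ} (e f : Fin n → M) :
    ∀ x ∈ cs R e f, ∀ y ∈ cs R e f, x * y = y * x := by
  rintro _ ⟨p, rfl⟩ _ ⟨q, rfl⟩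
  exact pair_comm _ _ _ _

variable (R) in
noncomputable abbrev commInst {n : ℕ} (e f : Fin n → M) :
    CommRing (Algebra.adjoin R (cs R e f)) :=
  { (inferInstance : Ring (Algebra.adjoin R (cs R e f))) with
    mul_comm := fun x y => (Algebra.isMulCommutative_adjoin R (cs_comm e f)).is_comm.comm x y }

attribute [local instance] commInst

variable (R) in
noncomputable def Ca {n : ℕ} (e f : Fin n → M) (p : Fin n × Fin n) :
    Algebra.adjoin R (cs R e f) :=
  ⟨ι R (e p.1) * ι R (f p.2), Algebra.subset_adjoin ⟨p, rfl⟩⟩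

lemma Ca_val {n : ℕ} (e f : Fin n → M) (p : Fin n × Fin n) :
    (Ca R e f p : ExteriorAlgebra R M) = ι R (e p.1) * ι R (f p.2) := rfl

lemma Ca_mul_fst {n : ℕ} (e f : Fin n → M) (p q : Fin n × Fin n) (h : p.1 = q.1) :
    Ca R e f p * Ca R e f q = 0 := by
  apply Subtype.ext
  push_cast [Ca_val]
  rw [h]
  exact zero_fst _ _ _

lemma Ca_mul_snd {n : ℕ} (e f : Fin n → M) (p q : Fin n × Fin n) (h : p.2 = q.2) :
    Ca R e f p * Ca R e f q = 0 := by
  apply Subtype.ext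
  push_cast [Ca_val]
  rw [h]
  exact zero_snd _ _ _

lemma Ca_four {n : ℕ} (e f : Fin n → M) (u v x y : Fin n) :
    Ca R e f (u, y) * Ca R e f (v, x) = -(Ca R e f (u, x) * Ca R e f (v, y)) := by
  apply Subtype.ext
  push_cast [Ca_val]
  exact four_swap _ _ _ _

open Finset Equiv Equiv.Perm

/-- generic vanishing: if two factors multiply to zero, the whole product is zero -/
lemma prod_eq_zero_of_pair {n : ℕ} (e f : Fin n → M) (h : Fin n → Fin n × Fin n)
    (i j : Fin n) (hij : i ≠ j) (hz : Ca R e f (h i) * Ca R e f (h j) = 0) :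
    ∏ t, Ca R e f (h t) = 0 := by
  classical
  rw [← Finset.mul_prod_erase univ _ (mem_univ i),
    ← Finset.mul_prod_erase (univ.erase i) _ (Finset.mem_erase.mpr ⟨Ne.symm hij, mem_univ j⟩),
    ← mul_assoc, hz, zero_mul]

lemma prod_vanish_fst {n : ℕ} (e f : Fin n → M) (h : Fin n → Fin n × Fin n)
    (hinj : ¬ Function.Injective fun i => (h i).1) :
    ∏ t, Ca R e f (h t) = 0 := by
  simp only [Function.Injective, not_forall] at hinj
  obtain ⟨i, j, hval, hne⟩ := hinj
  exact prod_eq_zero_of_pair e f h i j hne (Ca_mul_fst e f _ _ hval)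

lemma prod_vanish_snd {n : ℕ} (e f : Fin n → M) (h : Fin n → Fin n × Fin n)
    (hinj : ¬ Function.Injective fun i => (h i).2) :
    ∏ t, Ca R e f (h t) = 0 := by
  simp only [Function.Injective, not_forall] at hinj
  obtain ⟨i, j, hval, hne⟩ := hinj
  exact prod_eq_zero_of_pair e f h i j hne (Ca_mul_snd e f _ _ hval)

/-- sign lemma, one permutation version -/
lemma prod_perm_single {n : ℕ} (e f : Fin n → M) (π : Equiv.Perm (Fin n)) :
    ∏ i, Ca R e f (i, π i) = ((Equiv.Perm.sign π : ℤ)) • ∏ i, Ca R e f (i, i) := by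
  classical
  refine Equiv.Perm.swap_induction_on π (by simp) ?_
  intro π x y hxy ih
  have hswap : ∀ t : Fin n, t ≠ π⁻¹ x → t ≠ π⁻¹ y →
      Equiv.swap x y (π t) = π t := by
    intro t h1 h2
    apply Equiv.swap_apply_of_ne_of_ne
    · intro hc; exact h1 (by simp [← hc])
    · intro hc; exact h2 (by simp [← hc])
  have huv : (π⁻¹ x) ≠ (π⁻¹ y) := by
    intro hc; exact hxy (by simpa using congrArg π hc)
  have key : ∀ g : Equiv.Perm (Fin n),
      ∏ i, Ca R e f (i, g i)
        = Ca R e f (π⁻¹ x, g (π⁻¹ x)) * (Ca R e f (π⁻¹ y, g (π⁻¹ y)) *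
          ∏ t ∈ (univ.erase (π⁻¹ x)).erase (π⁻¹ y), Ca R e f (t, g t)) := by
    intro g
    rw [← Finset.mul_prod_erase univ _ (mem_univ (π⁻¹ x)),
      ← Finset.mul_prod_erase (univ.erase (π⁻¹ x)) _
        (Finset.mem_erase.mpr ⟨Ne.symm huv, mem_univ _⟩)]
  have hrest : ∏ t ∈ (univ.erase (π⁻¹ x)).erase (π⁻¹ y),
        Ca R e f (t, (Equiv.swap x y * π) t)
      = ∏ t ∈ (univ.erase (π⁻¹ x)).erase (π⁻¹ y), Ca R e f (t, π t) := by
    apply Finset.prod_congr rfl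
    intro t ht
    simp only [Finset.mem_erase] at ht
    rw [Equiv.Perm.mul_apply, hswap t ht.2.1 ht.1]
  rw [key (Equiv.swap x y * π), hrest]
  have h1 : (Equiv.swap x y * π) (π⁻¹ x) = y := by simp
  have h2 : (Equiv.swap x y * π) (π⁻¹ y) = x := by simp
  have kπ := key π
  simp only [Equiv.Perm.apply_inv_self] at kπ
  rw [h1, h2, ← mul_assoc, Ca_four, neg_mul, mul_assoc, ← kπ, ih]
  rw [Equiv.Perm.sign_mul, Equiv.Perm.sign_swap hxy]
  push_cast
  rw [neg_one_mul, neg_smul]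

/-- sign lemma, two permutations -/
lemma prod_perm_pair {n : ℕ} (e f : Fin n → M) (σ τ : Equiv.Perm (Fin n)) :
    ∏ i, Ca R e f (σ i, τ i)
      = ((Equiv.Perm.sign (τ * σ⁻¹) : ℤ)) • ∏ i, Ca R e f (i, i) := by
  have : ∏ i, Ca R e f (σ i, τ i) = ∏ i, Ca R e f (i, (τ * σ⁻¹) i) := by
    rw [← Equiv.prod_comp σ (fun j => Ca R e f (j, (τ * σ⁻¹) j))]
    apply Finset.prod_congr rfl
    intro i _
    simp [Equiv.Perm.mul_apply]
  rw [this, prod_perm_single]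

open Finset Equiv Equiv.Perm


lemma adj_eq {m : ℕ} (a : Matrix (Fin (m+1)) (Fin (m+1)) R) (k ℓ : Fin (m+1)) :
    a.adjugate ℓ k = ∑ π ∈ univ.filter (fun π : Perm (Fin (m+1)) => π ℓ = k),
      ((Equiv.Perm.sign π : ℤ) : R) * ∏ j ∈ univ.erase ℓ, a (π j) j := by
  classical
  rw [Matrix.adjugate_apply, Matrix.det_apply,
    ← Finset.sum_filter_add_sum_filter_not univ (fun π : Perm (Fin (m+1)) => π ℓ = k)]
  have h2 : ∑ π ∈ univ.filter (fun π : Perm (Fin (m+1)) => ¬ π ℓ = k),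
      Equiv.Perm.sign π • ∏ i, (a.updateRow k (Pi.single ℓ 1)) (π i) i = 0 := by
    apply Finset.sum_eq_zero
    intro π hπ
    simp only [Finset.mem_filter] at hπ
    have hz : (a.updateRow k (Pi.single ℓ 1)) (π (π⁻¹ k)) (π⁻¹ k) = 0 := by
      rw [Equiv.Perm.apply_inv_self, Matrix.updateRow_self, Pi.single_eq_of_ne]
      intro hc
      exact hπ.2 (by rw [← hc, Equiv.Perm.apply_inv_self])
    rw [Finset.prod_eq_zero (f := fun i => a.updateRow k (Pi.single ℓ 1) (π i) i)
      (Finset.mem_univ (π⁻¹ k)) hz, smul_zero]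
  rw [h2, add_zero]
  apply Finset.sum_congr rfl
  intro π hπ
  simp only [Finset.mem_filter] at hπ
  have hp := hπ.2
  rw [← Finset.mul_prod_erase univ _ (Finset.mem_univ ℓ)]
  have h3 : (a.updateRow k (Pi.single ℓ 1)) (π ℓ) ℓ = 1 := by
    rw [hp, Matrix.updateRow_self, Pi.single_eq_same]
  have h4 : ∏ j ∈ univ.erase ℓ, (a.updateRow k (Pi.single ℓ 1)) (π j) j
      = ∏ j ∈ univ.erase ℓ, a (π j) j := by
    apply Finset.prod_congr rfl
    intro j hj
    have hne : π j ≠ k := fun hc => (Finset.mem_erase.mp hj).1 (π.injective (hc.trans hp.symm))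
    rw [Matrix.updateRow_ne hne]
  rw [h3, one_mul, h4, Units.smul_def, zsmul_eq_mul]

lemma card_fix {m : ℕ} (ℓ : Fin (m+1)) :
    (univ.filter fun τ : Perm (Fin (m+1)) => τ 0 = ℓ).card = m.factorial := by
  classical
  have h : (univ.filter fun τ : Perm (Fin (m+1)) => τ 0 = ℓ).card
      = (univ : Finset (Perm (Fin m))).card := by
    apply Finset.card_nbij' (fun τ => (Equiv.Perm.decomposeFin τ).2)
      (fun ρ => Equiv.Perm.decomposeFin.symm (ℓ, ρ))
    · intro τ _; exact Finset.mem_univ _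
    · intro ρ _
      simp [Equiv.Perm.decomposeFin_symm_apply_zero]
    · intro τ hτ
      simp only [Finset.mem_coe, Finset.mem_filter] at hτ
      have h1 : (Equiv.Perm.decomposeFin τ).1 = ℓ := by
        have := Equiv.Perm.decomposeFin_symm_apply_zero (Equiv.Perm.decomposeFin τ).1
          (Equiv.Perm.decomposeFin τ).2
        rw [Prod.mk.eta, Equiv.symm_apply_apply] at this
        rw [← this, hτ.2]
      conv_rhs => rw [← Equiv.symm_apply_apply Equiv.Perm.decomposeFin τ]
      rw [← h1]
    · intro ρ _
      simp
  rw [h, Finset.card_univ, Fintype.card_perm, Fintype.card_fin]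

lemma pair_sum {m : ℕ} (a : Matrix (Fin (m+1)) (Fin (m+1)) R) (k ℓ : Fin (m+1)) :
    ∑ στ ∈ univ.filter
      (fun στ : Perm (Fin (m+1)) × Perm (Fin (m+1)) => στ.1 0 = k ∧ στ.2 0 = ℓ),
      (((Equiv.Perm.sign (στ.2 * στ.1⁻¹) : ℤ) : R) * ∏ i : Fin m, a (στ.1 i.succ) (στ.2 i.succ))
    = (m.factorial : R) * a.adjugate ℓ k := by
  classical
  have hset : univ.filter
        (fun στ : Perm (Fin (m+1)) × Perm (Fin (m+1)) => στ.1 0 = k ∧ στ.2 0 = ℓ)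
      = (univ.filter fun σ : Perm (Fin (m+1)) => σ 0 = k) ×ˢ
        (univ.filter fun τ : Perm (Fin (m+1)) => τ 0 = ℓ) := by
    rw [← Finset.filter_product, Finset.univ_product_univ]
  rw [hset, Finset.sum_product, Finset.sum_comm]
  have hinner : ∀ τ ∈ univ.filter fun τ : Perm (Fin (m+1)) => τ 0 = ℓ,
      ∑ σ ∈ univ.filter (fun σ : Perm (Fin (m+1)) => σ 0 = k),
        (((Equiv.Perm.sign (τ * σ⁻¹) : ℤ) : R) * ∏ i : Fin m, a (σ i.succ) (τ i.succ))
      = a.adjugate ℓ k := by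
    intro τ hτ
    simp only [Finset.mem_filter] at hτ
    have hτ0 := hτ.2
    have hτinv : τ⁻¹ ℓ = 0 := by rw [← hτ0, Equiv.Perm.inv_apply_self]
    rw [adj_eq a k ℓ]
    apply Finset.sum_nbij' (fun σ => σ * τ⁻¹) (fun π => π * τ)
    · intro σ hσ
      simp only [Finset.mem_filter] at hσ ⊢
      exact ⟨Finset.mem_univ _, by rw [Equiv.Perm.mul_apply, hτinv, hσ.2]⟩
    · intro π hπ
      simp only [Finset.mem_filter] at hπ ⊢
      exact ⟨Finset.mem_univ _, by rw [Equiv.Perm.mul_apply, hτ0, hπ.2]⟩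
    · intro σ _; group
    · intro π _; group
    · intro σ hσ
      simp only [Finset.mem_filter] at hσ
      have hsgn : τ * σ⁻¹ = (σ * τ⁻¹)⁻¹ := by group
      rw [hsgn, Equiv.Perm.sign_inv]
      congr 1
      apply Finset.prod_nbij (fun i : Fin m => τ i.succ)
      · intro i _
        refine Finset.mem_erase.mpr ⟨?_, Finset.mem_univ _⟩
        intro hc
        exact Fin.succ_ne_zero i (τ.injective (hc.trans hτ0.symm))
      · intro i _ i' _ hii'
        exact Fin.succ_injective _ (τ.injective hii')
      · intro x hx
        have hx0 : τ⁻¹ x ≠ 0 := by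
          intro hc
          exact (Finset.mem_erase.mp hx).1 (by rw [← hτ0, ← hc, Equiv.Perm.apply_inv_self])
        obtain ⟨y, hy⟩ := Fin.exists_succ_eq_of_ne_zero hx0
        exact ⟨y, Finset.mem_coe.mpr (Finset.mem_univ _), by simp only [hy, Equiv.Perm.apply_inv_self]⟩
      · intro i _
        simp [Equiv.Perm.mul_apply]
  rw [Finset.sum_congr rfl hinner, Finset.sum_const, card_fix, nsmul_eq_mul]


lemma smul_prod_gen {A : Type*} [CommRing A] [Algebra R A] {κ : Type*} (s : Finset κ)
    (b : κ → R) (g : κ → A) :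
    ∏ i ∈ s, b i • g i = (∏ i ∈ s, b i) • ∏ i ∈ s, g i := by
  classical
  induction s using Finset.cons_induction_on with
  | empty => simp
  | cons j s hj ih => rw [Finset.prod_cons, Finset.prod_cons, Finset.prod_cons, ih, smul_mul_smul_comm]

lemma key {m : ℕ} (e f : Fin (m+1) → M) (a : Matrix (Fin (m+1)) (Fin (m+1)) R)
    (k ℓ : Fin (m+1)) :
    (∑ p : Fin (m+1) × Fin (m+1), a p.1 p.2 • (ι R (e p.1) * ι R (f p.2))) ^ m
        * (ι R (e k) * ι R (f ℓ))
      = m.factorial •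
        (a.adjugate ℓ k • (List.ofFn fun j : Fin (m+1) => ι R (e j) * ι R (f j)).prod) := by
  classical
  set G : (Fin m → Fin (m+1) × Fin (m+1)) → Fin (m+1) → Fin (m+1) × Fin (m+1) :=
    fun g => Fin.cons (k,ℓ) g with hG
  have hG0 : ∀ g, G g 0 = (k,ℓ) := fun g => by simp [hG]
  have hGs : ∀ g (i : Fin m), G g i.succ = g i := fun g i => by simp [hG]
  have main : (∑ p : Fin (m+1) × Fin (m+1), a p.1 p.2 • Ca R e f p) ^ m * Ca R e f (k, ℓ)
      = m.factorial • (a.adjugate ℓ k • ∏ i, Ca R e f (i, i)) := by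
    rw [← Fin.prod_const m (∑ p : Fin (m+1) × Fin (m+1), a p.1 p.2 • Ca R e f p)]
    rw [Finset.prod_univ_sum (fun _ => (univ : Finset (Fin (m+1) × Fin (m+1))))
        (fun _ p => a p.1 p.2 • Ca R e f p), Fintype.piFinset_univ, Finset.sum_mul]
    have hterm : ∀ g : Fin m → Fin (m+1) × Fin (m+1),
        (∏ i, a (g i).1 (g i).2 • Ca R e f (g i)) * Ca R e f (k, ℓ)
          = (∏ i, a (g i).1 (g i).2) • ∏ i : Fin (m+1), Ca R e f (G g i) := by
      intro g
      rw [smul_prod_gen, smul_mul_assoc]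
      congr 1
      rw [Fin.prod_univ_succ, hG0]
      rw [Finset.prod_congr rfl fun (i : Fin m) _ => congrArg (Ca R e f) (hGs g i)]
      rw [mul_comm]
    rw [Finset.sum_congr rfl fun g _ => hterm g]
    rw [← Finset.sum_filter_of_ne (p := fun g : Fin m → Fin (m+1) × Fin (m+1) =>
      Function.Injective (fun i => (G g i).1)
        ∧ Function.Injective (fun i => (G g i).2))
      (hp := by
        intro g _ hne
        by_contra hp
        rcases not_and_or.mp hp with h | h
        · exact hne (by rw [prod_vanish_fst e f _ h, smul_zero])
        · exact hne (by rw [prod_vanish_snd e f _ h, smul_zero]))]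
    have hbij : ∑ g ∈ univ.filter (fun g : Fin m → Fin (m+1) × Fin (m+1) =>
          Function.Injective (fun i => (G g i).1)
            ∧ Function.Injective (fun i => (G g i).2)),
          (∏ i, a (g i).1 (g i).2) • ∏ i : Fin (m+1), Ca R e f (G g i)
        = ∑ στ ∈ univ.filter (fun στ : Perm (Fin (m+1)) × Perm (Fin (m+1)) =>
            στ.1 0 = k ∧ στ.2 0 = ℓ),
          (((Equiv.Perm.sign (στ.2 * στ.1⁻¹) : ℤ) : R)
            * ∏ i : Fin m, a (στ.1 i.succ) (στ.2 i.succ)) • ∏ i, Ca R e f (i, i) := by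
      refine Finset.sum_bij' (i := fun (g : Fin m → Fin (m+1) × Fin (m+1)) hg =>
          ((Equiv.ofBijective (fun i => (G g i).1)
              (Finite.injective_iff_bijective.mp (Finset.mem_filter.mp hg).2.1),
            Equiv.ofBijective (fun i => (G g i).2)
              (Finite.injective_iff_bijective.mp (Finset.mem_filter.mp hg).2.2)) :
            Perm (Fin (m+1)) × Perm (Fin (m+1))))
        (j := fun στ _ => fun i : Fin m => (στ.1 i.succ, στ.2 i.succ)) ?_ ?_ ?_ ?_ ?_
      · intro g hg
        refine Finset.mem_filter.mpr ⟨Finset.mem_univ _, ?_, ?_⟩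
        · simp only [Equiv.ofBijective_apply]
          rw [hG0]
        · simp only [Equiv.ofBijective_apply]
          rw [hG0]
      · intro στ hστ
        simp only [Finset.mem_filter] at hστ ⊢
        refine ⟨Finset.mem_univ _, ?_, ?_⟩
        · have hfn : (fun i => (G (fun i : Fin m => (στ.1 i.succ, στ.2 i.succ)) i).1)
              = ⇑στ.1 := by
            funext i
            refine Fin.cases ?_ ?_ i
            · rw [hG0, hστ.2.1]
            · intro t; rw [hGs]
          rw [hfn]; exact στ.1.injective
        · have hfn : (fun i => (G (fun i : Fin m => (στ.1 i.succ, στ.2 i.succ)) i).2)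
              = ⇑στ.2 := by
            funext i
            refine Fin.cases ?_ ?_ i
            · rw [hG0, hστ.2.2]
            · intro t; rw [hGs]
          rw [hfn]; exact στ.2.injective
      · intro g hg
        funext i
        have h1 := hGs g i
        exact Prod.ext (by simp [Equiv.ofBijective, h1]) (by simp [Equiv.ofBijective, h1])
      · intro στ hστ
        simp only [Finset.mem_filter] at hστ
        refine Prod.ext ?_ ?_
        · apply Equiv.ext
          intro x
          simp only [Equiv.ofBijective_apply]
          refine Fin.cases ?_ ?_ x
          · rw [hG0, hστ.2.1]
          · intro t; rw [hGs]
        · apply Equiv.ext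
          intro x
          simp only [Equiv.ofBijective_apply]
          refine Fin.cases ?_ ?_ x
          · rw [hG0, hστ.2.2]
          · intro t; rw [hGs]
      · intro g hg
        have hpt : ∀ i : Fin (m+1), G g i
            = ((Equiv.ofBijective (fun i => (G g i).1)
                (Finite.injective_iff_bijective.mp (Finset.mem_filter.mp hg).2.1)) i,
               (Equiv.ofBijective (fun i => (G g i).2)
                (Finite.injective_iff_bijective.mp (Finset.mem_filter.mp hg).2.2)) i) := by
          intro i; rfl
        have hQ : ∏ i : Fin (m+1), Ca R e f (G g i)
            = ((Equiv.Perm.sign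
                ((Equiv.ofBijective (fun i => (G g i).2)
                  (Finite.injective_iff_bijective.mp (Finset.mem_filter.mp hg).2.2))
                * (Equiv.ofBijective (fun i => (G g i).1)
                  (Finite.injective_iff_bijective.mp (Finset.mem_filter.mp hg).2.1))⁻¹) : ℤ))
              • ∏ i, Ca R e f (i, i) := by
          rw [Finset.prod_congr rfl fun i _ => congrArg (Ca R e f) (hpt i)]
          exact prod_perm_pair e f _ _
        rw [hQ, ← Int.cast_smul_eq_zsmul R, smul_smul, mul_comm]
        congr 3
    rw [hbij, ← Finset.sum_smul, pair_sum, mul_smul, Nat.cast_smul_eq_nsmul]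
  have hω : (Subalgebra.val (Algebra.adjoin R (cs R e f)))
      (∑ p : Fin (m+1) × Fin (m+1), a p.1 p.2 • Ca R e f p)
      = ∑ p : Fin (m+1) × Fin (m+1), a p.1 p.2 • (ι R (e p.1) * ι R (f p.2)) := by
    rw [map_sum]
    exact Finset.sum_congr rfl fun p _ => by rw [map_smul]; rfl
  have hvol : (Subalgebra.val (Algebra.adjoin R (cs R e f)))
      (∏ i, Ca R e f (i, i))
      = (List.ofFn fun j : Fin (m+1) => ι R (e j) * ι R (f j)).prod := by
    rw [← List.prod_ofFn (f := fun i : Fin (m+1) => Ca R e f (i, i)), map_list_prod,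
      List.map_ofFn]
    rfl
  calc (∑ p : Fin (m+1) × Fin (m+1), a p.1 p.2 • (ι R (e p.1) * ι R (f p.2))) ^ m
        * (ι R (e k) * ι R (f ℓ))
      = (Subalgebra.val _) ((∑ p : Fin (m+1) × Fin (m+1), a p.1 p.2 • Ca R e f p) ^ m
          * Ca R e f (k, ℓ)) := by
        rw [map_mul, map_pow, hω]; rfl
    _ = (Subalgebra.val _) (m.factorial • (a.adjugate ℓ k • ∏ i, Ca R e f (i, i))) := by
        rw [main]
    _ = _ := by rw [map_nsmul, map_smul, hvol]

end Stmt19Aux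

/-- Let `R` be a commutative ring, `M` an `R`-module, `Λ(M)` its
exterior algebra, `e₁, …, eₙ, f₁, …, fₙ ∈ M` and `a` an `n × n` matrix over `R`. Set
`ω = Σ_{j,k} a_{jk} (e_j ∧ f_k)`. Then for all `k, ℓ`:
`ω^(n−1) ∧ e_k ∧ f_ℓ = (n−1)! · adj(a)_{ℓk} · (e₁ ∧ f₁ ∧ ⋯ ∧ eₙ ∧ fₙ)`,
and in particular `ω^n = n! · det(a) · (e₁ ∧ f₁ ∧ ⋯ ∧ eₙ ∧ fₙ)`. -/
theorem stmt_19 (R : Type*) [CommRing R] (M : Type*) [AddCommGroup M] [Module R M]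
    (n : ℕ) (hn : 1 ≤ n) (e f : Fin n → M) (a : Matrix (Fin n) (Fin n) R) :
    let ι' : M → ExteriorAlgebra R M := ExteriorAlgebra.ι R
    let ω : ExteriorAlgebra R M :=
      ∑ j : Fin n, ∑ k : Fin n, a j k • (ι' (e j) * ι' (f k))
    let vol : ExteriorAlgebra R M := (List.ofFn fun j : Fin n => ι' (e j) * ι' (f j)).prod
    (∀ k ℓ : Fin n,
      ω ^ (n - 1) * (ι' (e k) * ι' (f ℓ)) = (n - 1).factorial • (a.adjugate ℓ k • vol)) ∧
    ω ^ n = n.factorial • (a.det • vol) := by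
  obtain ⟨m, rfl⟩ : ∃ m, n = m + 1 := ⟨n - 1, (Nat.succ_pred_eq_of_pos hn).symm⟩
  intro ι' ω vol
  have hω : ω = ∑ p : Fin (m+1) × Fin (m+1), a p.1 p.2 • (ι' (e p.1) * ι' (f p.2)) := by
    rw [show ω = ∑ j : Fin (m+1), ∑ k : Fin (m+1), a j k • (ι' (e j) * ι' (f k)) from rfl]
    exact (Fintype.sum_prod_type fun p : Fin (m+1) × Fin (m+1) =>
      a p.1 p.2 • (ι' (e p.1) * ι' (f p.2))).symm
  have h1 : ∀ k ℓ : Fin (m+1),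
      ω ^ (m + 1 - 1) * (ι' (e k) * ι' (f ℓ))
        = (m + 1 - 1).factorial • (a.adjugate ℓ k • vol) := by
    intro k ℓ
    simp only [Nat.add_sub_cancel]
    rw [hω]
    exact Stmt19Aux.key e f a k ℓ
  refine ⟨h1, ?_⟩
  have htr : ∑ p : Fin (m+1) × Fin (m+1), a p.1 p.2 * a.adjugate p.2 p.1
      = (m+1) • a.det := by
    rw [Fintype.sum_prod_type]
    have hk : ∀ k : Fin (m+1), ∑ ℓ : Fin (m+1), a k ℓ * a.adjugate ℓ k = a.det := by
      intro k
      rw [← Matrix.mul_apply, Matrix.mul_adjugate, Matrix.smul_apply, Matrix.one_apply_eq,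
        smul_eq_mul, mul_one]
    rw [Finset.sum_congr rfl fun k _ => hk k, Finset.sum_const, Finset.card_univ,
      Fintype.card_fin]
  calc ω ^ (m+1) = ω ^ m * ω := by rw [pow_succ]
    _ = ∑ p : Fin (m+1) × Fin (m+1),
          a p.1 p.2 • (ω ^ m * (ι' (e p.1) * ι' (f p.2))) := by
        nth_rewrite 2 [hω]
        rw [Finset.mul_sum]
        refine Finset.sum_congr rfl fun p _ => ?_
        rw [mul_smul_comm]
    _ = ∑ p : Fin (m+1) × Fin (m+1),
          a p.1 p.2 • (m.factorial • (a.adjugate p.2 p.1 • vol)) := by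
        refine Finset.sum_congr rfl fun p _ => ?_
        have := h1 p.1 p.2
        simp only [Nat.add_sub_cancel] at this
        rw [this]
    _ = m.factorial • ((∑ p : Fin (m+1) × Fin (m+1),
          a p.1 p.2 * a.adjugate p.2 p.1) • vol) := by
        rw [Finset.sum_smul, Finset.smul_sum]
        refine Finset.sum_congr rfl fun p _ => ?_
        rw [smul_comm, smul_smul]
    _ = (m+1).factorial • (a.det • vol) := by
        rw [htr, smul_assoc, smul_smul, Nat.factorial_succ, mul_comm]
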